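/- (One-step regret bound for optimistic online mirror descent.) Suppose ψ is differentiable and 1-strongly convex with respect to the 2-norm on Z, that ‖F(z₁) − F(z₂)‖₂ ≤ L‖z₁ − z₂‖₂ for all z₁, z₂ ∈ Z and some L > 0, and that η ≤ 1/(8L). Then for any z ∈ Z and any t ≥ 1, the OOMD iterates satisfy η F(z_t)ᵀ(z_t − z) ≤ D_ψ(z, ẑ_t) − D_ψ(z, ẑ_{t+1}) − D_ψ(ẑ_{t+1}, z_t) − (15/16) D_ψ(z_t, ẑ_t) + (1/16) D_ψ(ẑ_t, z_{t−1}). -/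

import Mathlib

open Finset Filter Topology

noncomputable section

/-- Squared Euclidean norm on `ℝ^n`. -/
def sqnorm {n : ℕ} (z : Fin n → ℝ) : ℝ := ∑ i, (z i) ^ 2

/-- Euclidean (2-)norm on `ℝ^n`. -/
def norm2 {n : ℕ} (z : Fin n → ℝ) : ℝ := Real.sqrt (sqnorm z)

/-- 1-norm on `ℝ^n`. -/
def norm1 {n : ℕ} (z : Fin n → ℝ) : ℝ := ∑ i, |z i|

/-- Dot product on `ℝ^n`. -/
def dotp {n : ℕ} (a b : Fin n → ℝ) : ℝ := ∑ i, a i * b i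

/-- Treeplexes (Hoda et al.): probability simplexes, Cartesian products, and branching. -/
inductive IsTreeplex : {n : ℕ} → Set (Fin n → ℝ) → Prop
  | simplex (m : ℕ) :
      IsTreeplex {x : Fin (m + 1) → ℝ | (∀ i, 0 ≤ x i) ∧ (∑ i, x i) = 1}
  | prod {m k : ℕ} {S : Set (Fin m → ℝ)} {T : Set (Fin k → ℝ)} :
      IsTreeplex S → IsTreeplex T →
      IsTreeplex {z : Fin (m + k) → ℝ | ∃ u ∈ S, ∃ v ∈ T, z = Fin.append u v}
  | branch {m k : ℕ} {S : Set (Fin m → ℝ)} {T : Set (Fin k → ℝ)} (i : Fin m) :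
      IsTreeplex S → IsTreeplex T →
      IsTreeplex {z : Fin (m + k) → ℝ | ∃ u ∈ S, ∃ v ∈ T,
        z = Fin.append u (fun j => u i * v j)}

/-- A point `z = (x, y)` of the product space `ℝ^M × ℝ^N`. -/
abbrev Pt (M N : ℕ) := (Fin M → ℝ) × (Fin N → ℝ)

def dotPt {M N : ℕ} (a b : Pt M N) : ℝ := dotp a.1 b.1 + dotp a.2 b.2

def sqnormPt {M N : ℕ} (z : Pt M N) : ℝ := sqnorm z.1 + sqnorm z.2

def norm2Pt {M N : ℕ} (z : Pt M N) : ℝ := Real.sqrt (sqnormPt z)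

def norm1Pt {M N : ℕ} (z : Pt M N) : ℝ := norm1 z.1 + norm1 z.2

/-- The game operator `F(z) = (G y, -Gᵀ x)`. -/
def Fop {M N : ℕ} (G : Matrix (Fin M) (Fin N) ℝ) (z : Pt M N) : Pt M N :=
  (G.mulVec z.2, -(G.transpose.mulVec z.1))

/-- Bregman divergence of `ψ` (via the Fréchet derivative). -/
def Dbreg {M N : ℕ} (ψ : Pt M N → ℝ) (u v : Pt M N) : ℝ :=
  ψ u - ψ v - fderiv ℝ ψ v (u - v)

/-- Bregman divergence on a single space. -/
def Dbreg1 {n : ℕ} (ψ : (Fin n → ℝ) → ℝ) (u v : Fin n → ℝ) : ℝ :=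
  ψ u - ψ v - fderiv ℝ ψ v (u - v)

/-- Optimistic online mirror descent with Bregman-divergence function `D`,
step size `η`, iterates `z` and `zh` (the latter is `ẑ`), started from an
arbitrary `ẑ₁ = z₀ ∈ Z`. -/
def IsOOMD {M N : ℕ} (G : Matrix (Fin M) (Fin N) ℝ) (Z : Set (Pt M N))
    (D : Pt M N → Pt M N → ℝ) (η : ℝ) (z zh : ℕ → Pt M N) : Prop :=
  z 0 ∈ Z ∧ zh 1 = z 0 ∧
  (∀ t : ℕ, 1 ≤ t → z t ∈ Z ∧
    ∀ w ∈ Z, η * dotPt (z t) (Fop G (z (t - 1))) + D (z t) (zh t) ≤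
      η * dotPt w (Fop G (z (t - 1))) + D w (zh t)) ∧
  (∀ t : ℕ, 1 ≤ t → zh (t + 1) ∈ Z ∧
    ∀ w ∈ Z, η * dotPt (zh (t + 1)) (Fop G (z t)) + D (zh (t + 1)) (zh t) ≤
      η * dotPt w (Fop G (z t)) + D w (zh t))

def maxPayoff {M N : ℕ} (G : Matrix (Fin M) (Fin N) ℝ) (Y : Set (Fin N → ℝ))
    (x : Fin M → ℝ) : ℝ :=
  sSup ((fun y => dotp x (G.mulVec y)) '' Y)

def minPayoff {M N : ℕ} (G : Matrix (Fin M) (Fin N) ℝ) (X : Set (Fin M → ℝ))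
    (y : Fin N → ℝ) : ℝ :=
  sInf ((fun x => dotp x (G.mulVec y)) '' X)

/-- `X* = argmin_{x ∈ X} max_{y ∈ Y} xᵀGy`. -/
def Xstar {M N : ℕ} (G : Matrix (Fin M) (Fin N) ℝ) (X : Set (Fin M → ℝ))
    (Y : Set (Fin N → ℝ)) : Set (Fin M → ℝ) :=
  {x ∈ X | ∀ x' ∈ X, maxPayoff G Y x ≤ maxPayoff G Y x'}

/-- `Y* = argmax_{y ∈ Y} min_{x ∈ X} xᵀGy`. -/
def Ystar {M N : ℕ} (G : Matrix (Fin M) (Fin N) ℝ) (X : Set (Fin M → ℝ))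
    (Y : Set (Fin N → ℝ)) : Set (Fin N → ℝ) :=
  {y ∈ Y | ∀ y' ∈ Y, minPayoff G X y' ≤ minPayoff G X y}

/-- The set of Nash equilibria `Z* = X* × Y*`. -/
def NashSet {M N : ℕ} (G : Matrix (Fin M) (Fin N) ℝ) (X : Set (Fin M → ℝ))
    (Y : Set (Fin N → ℝ)) : Set (Pt M N) :=
  (Xstar G X Y) ×ˢ (Ystar G X Y)

/-- Generalized KL divergence (Bregman divergence of the vanilla entropy),
with the convention `0 ln 0 = 0`. -/
def KLgen {n : ℕ} (u v : Fin n → ℝ) : ℝ :=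
  ∑ i, (u i * Real.log (u i / v i) - u i + v i)

def KLgenPt {M N : ℕ} (u v : Pt M N) : ℝ := KLgen u.1 v.1 + KLgen u.2 v.2

/-- The combinatorial structure of a treeplex in sequence form: indices `Fin n`,
information sets `Fin K`, the information set `owner i = h(i)` of each index,
and the parent index `parent h = σ(h)` of each information set (`none` for the
root convention `z_{σ(h)} = 1`), with an acyclicity witness. -/
structure TreeplexData (n K : ℕ) where
  owner : Fin n → Fin K
  parent : Fin K → Option (Fin n)
  rank : Fin K → ℕ
  parent_rank : ∀ (h : Fin K) (j : Fin n), parent h = some j → rank (owner j) < rank h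

/-- `z_{σ(h)}`, with the convention that it is `1` when `h` has no parent. -/
def TreeplexData.parentVal {n K : ℕ} (T : TreeplexData n K) (z : Fin n → ℝ) (h : Fin K) : ℝ :=
  (T.parent h).elim 1 z

/-- The treeplex determined by `T`: `z ≥ 0` with `∑_{i ∈ Ω_h} z_i = z_{σ(h)}`. -/
def TreeplexData.set {n K : ℕ} (T : TreeplexData n K) : Set (Fin n → ℝ) :=
  {z | (∀ i, 0 ≤ z i) ∧
    ∀ h : Fin K, (∑ i ∈ Finset.univ.filter (fun i => T.owner i = h), z i) = T.parentVal z h}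

/-- `q_i = z_i / z_{p_i}`. -/
def TreeplexData.q {n K : ℕ} (T : TreeplexData n K) (z : Fin n → ℝ) (i : Fin n) : ℝ :=
  z i / T.parentVal z (T.owner i)

/-- The dilated entropy `Ψ^dil_α(z) = ∑_i α_{h(i)} z_i ln q_i`. -/
def dilEnt {n K : ℕ} (T : TreeplexData n K) (α : Fin K → ℝ) (z : Fin n → ℝ) : ℝ :=
  ∑ i, α (T.owner i) * z i * Real.log (T.q z i)

/-- Bregman divergence of the dilated entropy:
`D(u, z) = ∑_i α_{h(i)} u_i ln(q^u_i / q^z_i)`, with `0 ln 0 = 0`. -/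
def dilEntBreg {n K : ℕ} (T : TreeplexData n K) (α : Fin K → ℝ) (u z : Fin n → ℝ) : ℝ :=
  ∑ i, α (T.owner i) * u i * Real.log (T.q u i / T.q z i)

/-- Coordinates of a pair `z = (x, y)` indexed by `Fin M ⊕ Fin N`. -/
def coordsOf {M N : ℕ} (z : Pt M N) : Fin M ⊕ Fin N → ℝ := Sum.elim z.1 z.2

lemma IsTreeplex.coord_nonneg {n : ℕ} {S : Set (Fin n → ℝ)} (hS : IsTreeplex S) :
    ∀ z ∈ S, ∀ i, 0 ≤ z i := by
  induction hS with
  | simplex m => exact fun z hz i => hz.1 i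
  | prod hS hT ihS ihT =>
      rintro z ⟨u, hu, v, hv, rfl⟩ i
      refine Fin.addCases (fun i0 => ?_) (fun i0 => ?_) i
      · simpa [Fin.append_left] using ihS u hu i0
      · simpa [Fin.append_right] using ihT v hv i0
  | branch j hS hT ihS ihT =>
      rintro z ⟨u, hu, v, hv, rfl⟩ i
      refine Fin.addCases (fun i0 => ?_) (fun i0 => ?_) i
      · simpa [Fin.append_left] using ihS u hu i0
      · simp only [Fin.append_right]
        exact mul_nonneg (ihS u hu j) (ihT v hv i0)

lemma IsTreeplex.nonempty {n : ℕ} {S : Set (Fin n → ℝ)} (hS : IsTreeplex S) : S.Nonempty := by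
  induction hS with
  | simplex m =>
      refine ⟨fun _ => ((m : ℝ) + 1)⁻¹, fun i => by positivity, ?_⟩
      rw [Finset.sum_const, Finset.card_univ, Fintype.card_fin, nsmul_eq_mul]
      push_cast
      field_simp
  | prod hS hT ihS ihT =>
      obtain ⟨u, hu⟩ := ihS; obtain ⟨v, hv⟩ := ihT
      exact ⟨Fin.append u v, u, hu, v, hv, rfl⟩
  | branch j hS hT ihS ihT =>
      obtain ⟨u, hu⟩ := ihS; obtain ⟨v, hv⟩ := ihT
      exact ⟨_, u, hu, v, hv, rfl⟩

lemma IsTreeplex.convex {n : ℕ} {S : Set (Fin n → ℝ)} (hS : IsTreeplex S) : Convex ℝ S := by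
  induction hS with
  | simplex m =>
      intro x hx y hy a b ha hb hab
      refine ⟨fun i => ?_, ?_⟩
      · simp only [Pi.add_apply, Pi.smul_apply, smul_eq_mul]
        exact add_nonneg (mul_nonneg ha (hx.1 i)) (mul_nonneg hb (hy.1 i))
      · simp only [Pi.add_apply, Pi.smul_apply, smul_eq_mul]
        rw [Finset.sum_add_distrib, ← Finset.mul_sum, ← Finset.mul_sum, hx.2, hy.2]
        simpa using hab
  | prod hS hT ihS ihT =>
      rintro z ⟨u, hu, v, hv, rfl⟩ z' ⟨u', hu', v', hv', rfl⟩ a b ha hb hab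
      refine ⟨a • u + b • u', ihS hu hu' ha hb hab, a • v + b • v', ihT hv hv' ha hb hab, ?_⟩
      funext i
      refine Fin.addCases (fun i0 => ?_) (fun i0 => ?_) i <;>
        simp [Fin.append_left, Fin.append_right]
  | @branch m k S T j hS hT ihS ihT =>
      rintro z ⟨u, hu, v, hv, rfl⟩ z' ⟨u', hu', v', hv', rfl⟩ a b ha hb hab
      have hwS : a • u + b • u' ∈ S := ihS hu hu' ha hb hab
      have hwval : (a • u + b • u') j = a * u j + b * u' j := by
        simp [Pi.add_apply, Pi.smul_apply, smul_eq_mul]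
      by_cases hwj : (a • u + b • u') j = 0
      · obtain ⟨v0, hv0⟩ := hT.nonempty
        refine ⟨a • u + b • u', hwS, v0, hv0, ?_⟩
        have h1 : 0 ≤ a * u j := mul_nonneg ha (hS.coord_nonneg u hu j)
        have h2 : 0 ≤ b * u' j := mul_nonneg hb (hS.coord_nonneg u' hu' j)
        have h0 : a * u j + b * u' j = 0 := by rw [← hwval]; exact hwj
        have hau : a * u j = 0 := by linarith
        have hbu : b * u' j = 0 := by linarith
        funext i
        refine Fin.addCases (fun i0 => ?_) (fun i0 => ?_) i
        · simp [Fin.append_left]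
        · simp only [Pi.add_apply, Pi.smul_apply, smul_eq_mul, Fin.append_right, hwj]
          have : a * (u j * v i0) + b * (u' j * v' i0)
              = (a * u j) * v i0 + (b * u' j) * v' i0 := by ring
          rw [this, hau, hbu]; ring
      · have hwnn : 0 ≤ (a • u + b • u') j := hS.coord_nonneg _ hwS j
        set wj := (a • u + b • u') j with hwjdef
        refine ⟨a • u + b • u', hwS,
          ((a * u j) / wj) • v + ((b * u' j) / wj) • v', ?_, ?_⟩
        · refine ihT hv hv'
            (div_nonneg (mul_nonneg ha (hS.coord_nonneg u hu j)) hwnn)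
            (div_nonneg (mul_nonneg hb (hS.coord_nonneg u' hu' j)) hwnn) ?_
          rw [← add_div, ← hwval, div_self hwj]
        · funext i
          refine Fin.addCases (fun i0 => ?_) (fun i0 => ?_) i
          · simp [Fin.append_left]
          · simp only [Pi.add_apply, Pi.smul_apply, smul_eq_mul, Fin.append_right]
            rw [hwval] at hwj ⊢
            field_simp

section Aux
variable {M N : ℕ}

lemma dotPt_comm (a b : Pt M N) : dotPt a b = dotPt b a := by
  simp [dotPt, dotp, mul_comm]

lemma dotPt_add_left (x y f : Pt M N) : dotPt (x + y) f = dotPt x f + dotPt y f := by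
  simp only [dotPt, dotp, Prod.fst_add, Prod.snd_add, Pi.add_apply, add_mul,
    Finset.sum_add_distrib]
  ring

lemma dotPt_smul_left (s : ℝ) (x f : Pt M N) : dotPt (s • x) f = s * dotPt x f := by
  simp only [dotPt, dotp, Prod.smul_fst, Prod.smul_snd, Pi.smul_apply, smul_eq_mul,
    mul_assoc, ← Finset.mul_sum]
  ring

lemma dotPt_sub_left (x y f : Pt M N) : dotPt (x - y) f = dotPt x f - dotPt y f := by
  simp only [dotPt, dotp, Prod.fst_sub, Prod.snd_sub, Pi.sub_apply, sub_mul,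
    Finset.sum_sub_distrib]
  ring

lemma dotPt_sub_right (x f g : Pt M N) : dotPt x (f - g) = dotPt x f - dotPt x g := by
  rw [dotPt_comm, dotPt_sub_left, dotPt_comm f x, dotPt_comm g x]

lemma sqnorm_nonneg {n : ℕ} (z : Fin n → ℝ) : 0 ≤ sqnorm z :=
  Finset.sum_nonneg fun i _ => sq_nonneg _

lemma sqnormPt_nonneg (z : Pt M N) : 0 ≤ sqnormPt z :=
  add_nonneg (sqnorm_nonneg _) (sqnorm_nonneg _)

lemma norm2Pt_nonneg (z : Pt M N) : 0 ≤ norm2Pt z := Real.sqrt_nonneg _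

lemma norm2Pt_sq (z : Pt M N) : (norm2Pt z) ^ 2 = sqnormPt z :=
  Real.sq_sqrt (sqnormPt_nonneg z)

lemma sqnormPt_sub_comm (x y : Pt M N) : sqnormPt (x - y) = sqnormPt (y - x) := by
  simp only [sqnormPt, sqnorm, Prod.fst_sub, Prod.snd_sub, Pi.sub_apply]
  congr 1 <;> exact Finset.sum_congr rfl fun i _ => by ring

lemma sqnorm_add_le {n : ℕ} (x y : Fin n → ℝ) :
    sqnorm (x + y) ≤ 2 * sqnorm x + 2 * sqnorm y := by
  have h : ∀ i : Fin n, (x i + y i) ^ 2 ≤ 2 * (x i) ^ 2 + 2 * (y i) ^ 2 := fun i => by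
    nlinarith [sq_nonneg (x i - y i)]
  calc sqnorm (x + y) = ∑ i, (x i + y i) ^ 2 := by simp [sqnorm]
    _ ≤ ∑ i, (2 * (x i) ^ 2 + 2 * (y i) ^ 2) := Finset.sum_le_sum fun i _ => h i
    _ = 2 * sqnorm x + 2 * sqnorm y := by
        simp [sqnorm, Finset.sum_add_distrib, Finset.mul_sum]

lemma sqnormPt_add_le (x y : Pt M N) :
    sqnormPt (x + y) ≤ 2 * sqnormPt x + 2 * sqnormPt y := by
  have h1 := sqnorm_add_le x.1 y.1
  have h2 := sqnorm_add_le x.2 y.2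
  simp only [sqnormPt, Prod.fst_add, Prod.snd_add]
  linarith

lemma dotPt_sq_le (a b : Pt M N) : (dotPt a b) ^ 2 ≤ sqnormPt a * sqnormPt b := by
  have h : dotPt a b = ∑ i : Fin M ⊕ Fin N, coordsOf a i * coordsOf b i := by
    simp [dotPt, dotp, coordsOf, Fintype.sum_sum_type]
  have h1 : sqnormPt a = ∑ i : Fin M ⊕ Fin N, (coordsOf a i) ^ 2 := by
    simp [sqnormPt, sqnorm, coordsOf, Fintype.sum_sum_type]
  have h2 : sqnormPt b = ∑ i : Fin M ⊕ Fin N, (coordsOf b i) ^ 2 := by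
    simp [sqnormPt, sqnorm, coordsOf, Fintype.sum_sum_type]
  rw [h, h1, h2]
  exact Finset.sum_mul_sq_le_sq_mul_sq _ _ _

lemma Dbreg_three_point (ψ : Pt M N → ℝ) (u v a : Pt M N) :
    Dbreg ψ u a - Dbreg ψ u v - Dbreg ψ v a =
      fderiv ℝ ψ v (u - v) - fderiv ℝ ψ a (u - v) := by
  have h : (fderiv ℝ ψ a) (u - a) - (fderiv ℝ ψ a) (v - a) = (fderiv ℝ ψ a) (u - v) := by
    rw [← ContinuousLinearMap.map_sub]
    congr 1
    abel
  simp only [Dbreg]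
  linarith

lemma deriv_nonneg_of_right_min (h : ℝ → ℝ) (m : ℝ) (hd : HasDerivAt h m 0)
    (hge : ∀ s ∈ Set.Ioc (0:ℝ) 1, h 0 ≤ h s) : 0 ≤ m := by
  have hs : Tendsto (slope h 0) (𝓝[>] 0) (𝓝 m) :=
    (hasDerivAt_iff_tendsto_slope.1 hd).mono_left
      (nhdsWithin_mono 0 fun x hx => ne_of_gt hx)
  refine ge_of_tendsto hs ?_
  filter_upwards [Ioc_mem_nhdsGT_of_mem (Set.mem_Ico.2 ⟨le_refl (0:ℝ), one_pos⟩)] with s hs'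
  have h0 : h 0 ≤ h s := hge s hs'
  have he : slope h 0 s = (h s - h 0) / s := by
    rw [slope_def_field]; rw [sub_zero]
  rw [he]
  exact div_nonneg (by linarith) (le_of_lt hs'.1)

lemma fo_aux {Z : Set (Pt M N)} (hZ : Convex ℝ Z)
    (ψ : Pt M N → ℝ) (f : Pt M N) (η : ℝ) (a p w : Pt M N)
    (hdp : DifferentiableAt ℝ ψ p)
    (hp : p ∈ Z) (hw : w ∈ Z)
    (hmin : ∀ w' ∈ Z, η * dotPt p f + Dbreg ψ p a ≤ η * dotPt w' f + Dbreg ψ w' a) :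
    0 ≤ η * dotPt (w - p) f + fderiv ℝ ψ p (w - p) - fderiv ℝ ψ a (w - p) := by
  set d := w - p with hd
  set ℓ := fderiv ℝ ψ a with hℓ
  set c1 : ℝ := η * dotPt d f - ℓ d with hc1
  set h : ℝ → ℝ := fun s => ψ (p + s • d) + s * c1 with hh
  have hmem : ∀ s ∈ Set.Icc (0:ℝ) 1, p + s • d ∈ Z := by
    intro s hs
    have he : p + s • d = (1 - s) • p + s • w := by
      rw [hd]; module
    rw [he]
    exact hZ hp hw (by linarith [hs.2]) hs.1 (by ring)
  have hval : ∀ s : ℝ, η * dotPt (p + s • d) f + Dbreg ψ (p + s • d) a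
      = h s + (η * dotPt p f - ψ a - ℓ (p - a)) := by
    intro s
    have l1 : dotPt (p + s • d) f = dotPt p f + s * dotPt d f := by
      rw [dotPt_add_left, dotPt_smul_left]
    have l2 : ℓ (p + s • d - a) = ℓ (p - a) + s * ℓ d := by
      have e : p + s • d - a = (p - a) + s • d := by abel
      rw [e, ContinuousLinearMap.map_add, ContinuousLinearMap.map_smul, smul_eq_mul]
    simp only [Dbreg, hh, ← hℓ]
    rw [l1, l2]
    ring
  have hge : ∀ s ∈ Set.Ioc (0:ℝ) 1, h 0 ≤ h s := by
    intro s hs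
    have h1 := hmin _ (hmem s ⟨le_of_lt hs.1, hs.2⟩)
    have e1 := hval s
    have e0 := hval 0
    rw [zero_smul, add_zero] at e0
    linarith
  have hline : HasDerivAt (fun s : ℝ => p + s • d) d 0 := by
    simpa using ((hasDerivAt_id (0:ℝ)).smul_const d).const_add p
  have h0p : p + (0:ℝ) • d = p := by rw [zero_smul, add_zero]
  have hdp' : HasFDerivAt ψ (fderiv ℝ ψ p) (p + (0:ℝ) • d) := by
    rw [h0p]; exact hdp.hasFDerivAt
  have hψline : HasDerivAt (fun s : ℝ => ψ (p + s • d)) (fderiv ℝ ψ p d) 0 :=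
    hdp'.comp_hasDerivAt 0 hline
  have hder : HasDerivAt h (fderiv ℝ ψ p d + c1) 0 := hψline.add (hasDerivAt_mul_const c1)
  have hfin := deriv_nonneg_of_right_min h _ hder hge
  rw [hc1] at hfin
  linarith

end Aux

set_option maxHeartbeats 1000000 in
lemma oomd_core {M N : ℕ} {Z : Set (Pt M N)} (hZ : Convex ℝ Z)
    (ψ : Pt M N → ℝ) (η L : ℝ) (hη : 0 < η) (hL : 0 < L) (hηL : η ≤ 1 / (8 * L))
    (hdiff : ∀ v ∈ Z, DifferentiableAt ℝ ψ v)
    (hsc : ∀ u ∈ Z, ∀ v ∈ Z, (1 / 2) * sqnormPt (u - v) ≤ Dbreg ψ u v)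
    (a b c zp zz f g : Pt M N)
    (haZ : a ∈ Z) (hbZ : b ∈ Z) (hcZ : c ∈ Z) (hzpZ : zp ∈ Z) (hzzZ : zz ∈ Z)
    (hLfg : norm2Pt (f - g) ≤ L * norm2Pt (b - zp))
    (hbmin : ∀ w ∈ Z, η * dotPt b g + Dbreg ψ b a ≤ η * dotPt w g + Dbreg ψ w a)
    (hcmin : ∀ w ∈ Z, η * dotPt c f + Dbreg ψ c a ≤ η * dotPt w f + Dbreg ψ w a) :
    η * dotPt f (b - zz) ≤ Dbreg ψ zz a - Dbreg ψ zz c - Dbreg ψ c b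
      - (15 / 16) * Dbreg ψ b a + (1 / 16) * Dbreg ψ a zp := by
  have hdpb := hdiff b hbZ
  have hdpc := hdiff c hcZ
  -- first-order optimality conditions
  have FO_bc : 0 ≤ η * dotPt (c - b) g + fderiv ℝ ψ b (c - b) - fderiv ℝ ψ a (c - b) :=
    fo_aux hZ ψ g η a b c hdpb hbZ hcZ hbmin
  have FO_czz : 0 ≤ η * dotPt (zz - c) f + fderiv ℝ ψ c (zz - c) - fderiv ℝ ψ a (zz - c) :=
    fo_aux hZ ψ f η a c zz hdpc hcZ hzzZ hcmin
  have FO_cb : 0 ≤ η * dotPt (b - c) f + fderiv ℝ ψ c (b - c) - fderiv ℝ ψ a (b - c) :=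
    fo_aux hZ ψ f η a c b hdpc hcZ hbZ hcmin
  -- three-point identities
  have TP_cb := Dbreg_three_point ψ c b a
  have TP_zzc := Dbreg_three_point ψ zz c a
  have TP_bc := Dbreg_three_point ψ b c a
  -- dot product expansions
  have ex1 : dotPt (c - b) g = dotPt c g - dotPt b g := dotPt_sub_left c b g
  have ex2 : dotPt (zz - c) f = dotPt zz f - dotPt c f := dotPt_sub_left zz c f
  have ex3 : dotPt (b - c) f = dotPt b f - dotPt c f := dotPt_sub_left b c f
  have ex4 : dotPt (b - c) (f - g) = dotPt b f - dotPt c f - (dotPt b g - dotPt c g) := by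
    rw [dotPt_sub_right, dotPt_sub_left, dotPt_sub_left]
  rw [ex1] at FO_bc
  rw [ex2] at FO_czz
  rw [ex3] at FO_cb
  -- strong convexity of the two prox objectives: ‖b-c‖² ≤ η ⟨b-c, f-g⟩
  have hsum : sqnormPt (b - c) ≤ η * dotPt (b - c) (f - g) := by
    have s1 := hsc c hcZ b hbZ
    have s2 := hsc b hbZ c hcZ
    have e := sqnormPt_sub_comm c b
    rw [ex4]
    linarith [FO_bc, FO_cb, TP_cb, TP_bc]
  have hQ : 0 ≤ sqnormPt (f - g) := sqnormPt_nonneg _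
  have hs0 : 0 ≤ sqnormPt (b - c) := sqnormPt_nonneg _
  have hCS : (dotPt (b - c) (f - g)) ^ 2 ≤ sqnormPt (b - c) * sqnormPt (f - g) :=
    dotPt_sq_le _ _
  -- cross-term bound: η ⟨b-c, f-g⟩ ≤ η² ‖f-g‖²
  have hT : η * dotPt (b - c) (f - g) ≤ η ^ 2 * sqnormPt (f - g) := by
    rcases le_or_gt (dotPt (b - c) (f - g)) 0 with hle | hpos
    · have h1 : η * dotPt (b - c) (f - g) ≤ 0 := mul_nonpos_of_nonneg_of_nonpos hη.le hle
      nlinarith [sq_nonneg η]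
    · have hd2 : 0 < η * dotPt (b - c) (f - g) := mul_pos hη hpos
      have key : (η * dotPt (b - c) (f - g)) * (η * dotPt (b - c) (f - g))
          ≤ (η * dotPt (b - c) (f - g)) * (η ^ 2 * sqnormPt (f - g)) := by
        nlinarith [mul_le_mul_of_nonneg_left hCS (sq_nonneg η),
          mul_le_mul_of_nonneg_left hsum (mul_nonneg (sq_nonneg η) hQ)]
      exact le_of_mul_le_mul_left key hd2
  -- Lipschitz bound squared
  have hQL : sqnormPt (f - g) ≤ L ^ 2 * sqnormPt (b - zp) := by
    have h2 : (norm2Pt (f - g)) ^ 2 ≤ (L * norm2Pt (b - zp)) ^ 2 :=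
      pow_le_pow_left₀ (norm2Pt_nonneg _) hLfg 2
    rw [norm2Pt_sq, mul_pow, norm2Pt_sq] at h2
    exact h2
  have hηL2 : η ^ 2 * L ^ 2 ≤ 1 / 64 := by
    rw [le_div_iff₀ (by positivity : (0:ℝ) < 8 * L)] at hηL
    nlinarith [mul_nonneg hη.le hL.le]
  have hsplit : sqnormPt (b - zp) ≤ 2 * sqnormPt (b - a) + 2 * sqnormPt (a - zp) := by
    have e : b - zp = (b - a) + (a - zp) := by abel
    rw [e]
    exact sqnormPt_add_le _ _
  have hba := hsc b hbZ a haZ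
  have hazp := hsc a haZ zp hzpZ
  have A3 : η * dotPt (b - c) (f - g)
      ≤ (1 / 16) * Dbreg ψ b a + (1 / 16) * Dbreg ψ a zp := by
    linarith [hT, mul_le_mul_of_nonneg_left hQL (sq_nonneg η),
      mul_le_mul_of_nonneg_right hηL2 (sqnormPt_nonneg (b - zp)), hsplit, hba, hazp]
  have eL : dotPt f (b - zz) = dotPt b f - dotPt zz f := by
    rw [dotPt_comm, dotPt_sub_left]
  rw [ex4] at A3
  rw [eL]
  linarith [FO_bc, FO_czz, TP_cb, TP_zzc, A3]


/-- Lemma 7: one-step regret bound for optimistic online mirror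
descent over the treeplex product `Z = X × Y`, for a differentiable regularizer `ψ`
that is 1-strongly convex w.r.t. the 2-norm, an `L`-Lipschitz operator `F`, and
step size `η ≤ 1/(8L)`. -/
theorem oomd_one_step_regret {M N : ℕ}
    (G : Matrix (Fin M) (Fin N) ℝ) (hG : ∀ i j, |G i j| ≤ 1)
    (X : Set (Fin M → ℝ)) (Y : Set (Fin N → ℝ))
    (hX : IsTreeplex X) (hY : IsTreeplex Y)
    (ψ : Pt M N → ℝ)
    (hdiff : ∀ v ∈ X ×ˢ Y, DifferentiableAt ℝ ψ v)
    (hsc : ∀ u ∈ X ×ˢ Y, ∀ v ∈ X ×ˢ Y, (1 / 2) * sqnormPt (u - v) ≤ Dbreg ψ u v)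
    (L : ℝ) (hL : 0 < L)
    (hLip : ∀ z₁ ∈ X ×ˢ Y, ∀ z₂ ∈ X ×ˢ Y,
      norm2Pt (Fop G z₁ - Fop G z₂) ≤ L * norm2Pt (z₁ - z₂))
    (η : ℝ) (hη : 0 < η) (hηL : η ≤ 1 / (8 * L))
    (z zh : ℕ → Pt M N) (hoomd : IsOOMD G (X ×ˢ Y) (Dbreg ψ) η z zh) :
    ∀ zz ∈ X ×ˢ Y, ∀ t : ℕ, 1 ≤ t →
      η * dotPt (Fop G (z t)) (z t - zz) ≤
        Dbreg ψ zz (zh t) - Dbreg ψ zz (zh (t + 1)) - Dbreg ψ (zh (t + 1)) (z t)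
          - (15 / 16) * Dbreg ψ (z t) (zh t) + (1 / 16) * Dbreg ψ (zh t) (z (t - 1)) := by
  intro zz hzz t ht
  obtain ⟨hz0, hzh1, hziter, hzhiter⟩ := hoomd
  obtain ⟨s, rfl⟩ : ∃ s, t = s + 1 := ⟨t - 1, by omega⟩
  simp only [Nat.add_sub_cancel]
  have hZconv : Convex ℝ (X ×ˢ Y) := (hX.convex).prod (hY.convex)
  have hbZ : z (s + 1) ∈ X ×ˢ Y := (hziter (s + 1) (by omega)).1
  have hcZ : zh (s + 1 + 1) ∈ X ×ˢ Y := (hzhiter (s + 1) (by omega)).1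
  have haZ : zh (s + 1) ∈ X ×ˢ Y := by
    rcases Nat.eq_zero_or_pos s with hs0 | hs1
    · subst hs0
      rw [show zh (0 + 1) = z 0 from hzh1]
      exact hz0
    · exact (hzhiter s hs1).1
  have hzpZ : z s ∈ X ×ˢ Y := by
    rcases Nat.eq_zero_or_pos s with hs0 | hs1
    · subst hs0; exact hz0
    · exact (hziter s hs1).1
  have hbmin : ∀ w ∈ X ×ˢ Y,
      η * dotPt (z (s + 1)) (Fop G (z s)) + Dbreg ψ (z (s + 1)) (zh (s + 1)) ≤
        η * dotPt w (Fop G (z s)) + Dbreg ψ w (zh (s + 1)) := by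
    intro w hw
    have h := (hziter (s + 1) (by omega)).2 w hw
    simpa only [Nat.add_sub_cancel] using h
  have hcmin := (hzhiter (s + 1) (by omega)).2
  exact oomd_core hZconv ψ η L hη hL hηL hdiff hsc
    (zh (s + 1)) (z (s + 1)) (zh (s + 1 + 1)) (z s) zz
    (Fop G (z (s + 1))) (Fop G (z s))
    haZ hbZ hcZ hzpZ hzz
    (hLip (z (s + 1)) hbZ (z s) hzpZ) hbmin hcmin
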